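/- For a finite nonempty polyomino P contained in a w×h rectangle (its minimal bounding rectangle), the boundary ∂P — the set of tiles of P that are 4-adjacent to an empty pixel or form a diagonal pair with an empty pixel — has cardinality at least max(w,h). -/

import Mathlib

def Adj (p q : ℤ × ℤ) : Prop := |p.1 - q.1| + |p.2 - q.2| = 1

def DiagPair (p q : ℤ × ℤ) : Prop := |p.1 - q.1| = 1 ∧ |p.2 - q.2| = 1

def ConnectedVia (P : Set (ℤ × ℤ)) (R : ℤ × ℤ → ℤ × ℤ → Prop) : Prop :=
  ∀ p ∈ P, ∀ q ∈ P, Relation.ReflTransGen (fun a b => a ∈ P ∧ b ∈ P ∧ R a b) p q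

/-- The boundary of `P`: tiles adjacent (or diagonal) to an empty pixel. -/
def Boundary (P : Finset (ℤ × ℤ)) : Set (ℤ × ℤ) :=
  {p | p ∈ P ∧ ∃ q, q ∉ P ∧ (Adj p q ∨ DiagPair p q)}

lemma adj_fst_le {p q : ℤ × ℤ} (h : Adj p q) : |p.1 - q.1| ≤ 1 := by
  have := abs_nonneg (p.2 - q.2); unfold Adj at h; linarith

/-- intermediate value along a 4-connected chain -/
lemma interm (P : Set (ℤ × ℤ)) (x : ℤ) {a b : ℤ × ℤ}
    (h : Relation.ReflTransGen (fun p q => p ∈ P ∧ q ∈ P ∧ Adj p q) a b)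
    (ha : a ∈ P) (h1 : a.1 ≤ x) (h2 : x ≤ b.1) : ∃ r ∈ P, r.1 = x := by
  induction h with
  | refl => exact ⟨a, ha, le_antisymm h1 h2⟩
  | @tail c b hac hcb ih =>
    obtain ⟨hc, hb, hadj⟩ := hcb
    by_cases hx : x ≤ c.1
    · exact ih hx
    · refine ⟨b, hb, ?_⟩
      have := adj_fst_le hadj
      have := abs_le.mp this
      omega

open Classical in
/-- width lower bound -/
lemma width_le (P : Finset (ℤ × ℤ)) (hne : P.Nonempty)
    (hconn : ConnectedVia ↑P Adj) (w : ℕ)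
    (hw : (w : ℤ) = (P.image Prod.fst).max' (hne.image _)
        - (P.image Prod.fst).min' (hne.image _) + 1) :
    w ≤ (Boundary P).ncard := by
  set m := (P.image Prod.fst).min' (hne.image _) with hm
  set M := (P.image Prod.fst).max' (hne.image _) with hM
  -- every column is occupied
  obtain ⟨a, haP, ha⟩ := Finset.mem_image.mp ((P.image Prod.fst).min'_mem (hne.image _))
  obtain ⟨b, hbP, hb⟩ := Finset.mem_image.mp ((P.image Prod.fst).max'_mem (hne.image _))
  have hcol : ∀ x ∈ Finset.Icc m M, ∃ r ∈ P, r.1 = x := by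
    intro x hx
    rw [Finset.mem_Icc] at hx
    exact interm (↑P) x (hconn a haP b hbP) haP (by omega) (by omega)
  -- the "top of column" tiles
  set S : Finset (ℤ × ℤ) := P.filter (fun p => (p.1, p.2 + 1) ∉ P) with hS
  have hsub : Finset.Icc m M ⊆ S.image Prod.fst := by
    intro x hx
    obtain ⟨r, hrP, hr⟩ := hcol x hx
    set C : Finset ℤ := (P.filter (fun p => p.1 = x)).image Prod.snd with hC
    have hCne : C.Nonempty := ⟨r.2, Finset.mem_image.mpr ⟨r, Finset.mem_filter.mpr ⟨hrP, hr⟩, rfl⟩⟩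
    set y := C.max' hCne with hy
    obtain ⟨p, hpC, hp⟩ := Finset.mem_image.mp (C.max'_mem hCne)
    obtain ⟨hpP, hpx⟩ := Finset.mem_filter.mp hpC
    refine Finset.mem_image.mpr ⟨p, ?_, hpx⟩
    refine Finset.mem_filter.mpr ⟨hpP, ?_⟩
    intro hmem
    have : p.2 + 1 ∈ C := Finset.mem_image.mpr ⟨(p.1, p.2 + 1),
      Finset.mem_filter.mpr ⟨hmem, hpx⟩, rfl⟩
    have := C.le_max' _ this
    omega
  have hScard : w ≤ S.card := by
    have h1 : (Finset.Icc m M).card ≤ (S.image Prod.fst).card := Finset.card_le_card hsub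
    have h2 : (S.image Prod.fst).card ≤ S.card := Finset.card_image_le
    have h3 : (Finset.Icc m M).card = (M + 1 - m).toNat := Int.card_Icc m M
    omega
  -- S ⊆ Boundary
  have hSB : (↑S : Set (ℤ × ℤ)) ⊆ Boundary P := by
    intro p hp
    obtain ⟨hpP, hq⟩ := Finset.mem_filter.mp hp
    refine ⟨hpP, (p.1, p.2 + 1), hq, Or.inl ?_⟩
    simp [Adj]
  have hfin : (Boundary P).Finite :=
    Set.Finite.subset P.finite_toSet (fun p hp => hp.1)
  calc w ≤ S.card := hScard
    _ = (↑S : Set (ℤ × ℤ)).ncard := (Set.ncard_coe_finset S).symm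
    _ ≤ (Boundary P).ncard := Set.ncard_le_ncard hSB hfin

lemma adj_swap {p q : ℤ × ℤ} (h : Adj p q) : Adj p.swap q.swap := by
  unfold Adj at *; simp [Prod.swap] at *; linarith

lemma diag_swap {p q : ℤ × ℤ} (h : DiagPair p q) : DiagPair p.swap q.swap := by
  unfold DiagPair at *; simp [Prod.swap] at *; tauto

/-- For a finite nonempty 4-connected polyomino in a minimal `w × h` bounding
rectangle, the boundary has at least `max w h` tiles. -/
theorem stmt_2 (P : Finset (ℤ × ℤ)) (hne : P.Nonempty)
    (hconn : ConnectedVia ↑P Adj) (w h : ℕ)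
    (hw : (w : ℤ) = (P.image Prod.fst).max' (hne.image _)
        - (P.image Prod.fst).min' (hne.image _) + 1)
    (hh : (h : ℤ) = (P.image Prod.snd).max' (hne.image _)
        - (P.image Prod.snd).min' (hne.image _) + 1) :
    max w h ≤ (Boundary P).ncard := by
  have hwle := width_le P hne hconn w hw
  -- now the height, via swapping
  set Q : Finset (ℤ × ℤ) := P.image Prod.swap with hQ
  have hmemQ : ∀ p : ℤ × ℤ, p ∈ Q ↔ p.swap ∈ P := by
    intro p
    simp only [hQ, Finset.mem_image]
    constructor
    · rintro ⟨a, ha, rfl⟩; simpa using ha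
    · intro hp; exact ⟨p.swap, hp, Prod.swap_swap p⟩
  have hneQ : Q.Nonempty := hne.image _
  have hconnQ : ConnectedVia ↑Q Adj := by
    intro p hp q hq
    have hp' : p.swap ∈ P := (hmemQ p).mp hp
    have hq' : q.swap ∈ P := (hmemQ q).mp hq
    have := hconn p.swap hp' q.swap hq'
    have := Relation.ReflTransGen.lift (r := fun a b => a ∈ (↑P : Set (ℤ × ℤ)) ∧ b ∈ ↑P ∧ Adj a b)
      (p := fun a b => a ∈ (↑Q : Set (ℤ × ℤ)) ∧ b ∈ ↑Q ∧ Adj a b)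
      Prod.swap (fun a b hab => by
        exact ⟨(hmemQ a.swap).mpr (by simpa using hab.1),
          (hmemQ b.swap).mpr (by simpa using hab.2.1), adj_swap hab.2.2⟩) _ _ this
    simpa [Function.onFun] using this
  have himg : Q.image Prod.fst = P.image Prod.snd := by
    rw [hQ, Finset.image_image]
    rfl
  have max'_congr : ∀ {s t : Finset ℤ} (_ : s = t) (hs : s.Nonempty) (ht : t.Nonempty),
      s.max' hs = t.max' ht := by rintro s t rfl hs ht; rfl
  have min'_congr : ∀ {s t : Finset ℤ} (_ : s = t) (hs : s.Nonempty) (ht : t.Nonempty),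
      s.min' hs = t.min' ht := by rintro s t rfl hs ht; rfl
  have hhQ : (h : ℤ) = (Q.image Prod.fst).max' (hneQ.image _)
      - (Q.image Prod.fst).min' (hneQ.image _) + 1 := by
    rw [max'_congr himg _ (hne.image _), min'_congr himg _ (hne.image _)]
    exact hh
  have hhle := width_le Q hneQ hconnQ h hhQ
  have hfinP : (Boundary P).Finite :=
    Set.Finite.subset P.finite_toSet (fun p hp => hp.1)
  have hBQ : Boundary Q ⊆ Prod.swap '' Boundary P := by
    rintro p ⟨hpQ, q, hqQ, hpq⟩
    refine ⟨p.swap, ⟨(hmemQ p).mp hpQ, q.swap, ?_, ?_⟩, Prod.swap_swap p⟩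
    · intro hq
      exact hqQ ((hmemQ q).mpr (by simpa using hq))
    · rcases hpq with h' | h'
      · exact Or.inl (adj_swap h')
      · exact Or.inr (diag_swap h')
  have hhle2 : h ≤ (Boundary P).ncard := by
    calc h ≤ (Boundary Q).ncard := hhle
      _ ≤ (Prod.swap '' Boundary P).ncard :=
          Set.ncard_le_ncard hBQ (hfinP.image _)
      _ = (Boundary P).ncard := Set.ncard_image_of_injective _ Prod.swap_injective
  exact max_le hwle hhle2
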